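/- Let G be a finite group and ρ_1, …, ρ_m irreducible representations of G on nonzero finite-dimensional complex vector spaces W_1, …, W_m. For each j let U_j ⊆ W_j be a nonzero subspace which is projectively general, meaning: whenever g ∈ G and μ ∈ ℂ satisfy ρ_j(g)u = μ·u for all u ∈ U_j, then ρ_j(g) = μ·id_{W_j}. Let ψ_j : Z(G) → ℂ^× be the homomorphisms on the center Z(G) of G determined by ρ_j(z) = ψ_j(z)·id_{W_j} for z ∈ Z(G). Assume (i) for every h ≠ 1 in G there is j with ρ_j(h) ≠ id, and (ii) the characters ψ_j·ψ_1⁻¹ (j = 1, …, m) generate the full character group Hom(Z(G), ℂ^×). Then for all h, k ∈ G and λ ∈ ℂ: if ρ_j(h)u = λ·ρ_j(k)u for every j and every u ∈ U_j, then h = k. -/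

import Mathlib

/-- Last clause of Proposition 2.9: let `ρ_1, …, ρ_m` be irreducible representations of a
finite group `G` on nonzero finite-dimensional complex vector spaces, `U_j ⊆ W_j` nonzero
projectively general subspaces, and `ψ_j` the central characters with `ρ_j z = ψ_j z • 1`
on the center.  If (i) `⋂ ker ρ_j = 1` and (ii) the ratios `ψ_j ψ_1⁻¹` generate the
character group of `Z(G)`, then points of `G` are projectively separated: if
`ρ_j h u = λ • ρ_j k u` for all `j` and all `u ∈ U_j`, then `h = k`. -/
theorem projectively_general_separates
    {G : Type*} [Group G] [Fintype G] {m : ℕ} (hm : 0 < m)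
    (W : Fin m → Type*) [∀ j, AddCommGroup (W j)] [∀ j, Module ℂ (W j)]
    [∀ j, FiniteDimensional ℂ (W j)] [∀ j, Nontrivial (W j)]
    (ρ : ∀ j, Representation ℂ G (W j))
    (hirr : ∀ j, ∀ p : Submodule ℂ (W j),
      (∀ g : G, ∀ x ∈ p, ρ j g x ∈ p) → p = ⊥ ∨ p = ⊤)
    (U : ∀ j, Submodule ℂ (W j)) (hU : ∀ j, U j ≠ ⊥)
    (hgen : ∀ j, ∀ g : G, ∀ μ : ℂ,
      (∀ u ∈ U j, ρ j g u = μ • u) → ρ j g = μ • (1 : W j →ₗ[ℂ] W j))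
    (ψ : Fin m → (↥(Subgroup.center G) →* ℂˣ))
    (hψ : ∀ j, ∀ z : ↥(Subgroup.center G),
      ρ j (z : G) = ((ψ j z : ℂ) • (1 : W j →ₗ[ℂ] W j)))
    (hfaith : ∀ h : G, h ≠ 1 → ∃ j, ρ j h ≠ 1)
    (hcenter : Subgroup.closure
      (Set.range fun j : Fin m => ψ j * (ψ ⟨0, hm⟩)⁻¹) = ⊤) :
    ∀ h k : G, ∀ l : ℂ,
      (∀ j, ∀ u ∈ U j, ρ j h u = l • ρ j k u) → h = k := by
  intro h k l hcond
  obtain ⟨g, hgdef⟩ : ∃ g : G, g = k⁻¹ * h := ⟨_, rfl⟩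
  -- each ρ j g acts as l on U j, hence is l • 1
  have hg : ∀ j, ρ j g = l • (1 : W j →ₗ[ℂ] W j) := by
    intro j
    refine hgen j g l (fun u hu => ?_)
    have := hcond j u hu
    calc ρ j g u = ρ j k⁻¹ (ρ j h u) := by
          rw [hgdef, map_mul]; rfl
      _ = ρ j k⁻¹ (l • ρ j k u) := by rw [this]
      _ = l • ρ j k⁻¹ (ρ j k u) := by rw [map_smul]
      _ = l • u := by
          rw [← Module.End.mul_apply, ← map_mul, inv_mul_cancel, map_one,
            Module.End.one_apply]
  -- l ≠ 0
  have hl : l ≠ 0 := by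
    intro h0
    obtain ⟨w, hw⟩ := exists_ne (0 : W ⟨0, hm⟩)
    have h1 : ρ ⟨0, hm⟩ g w = 0 := by
      rw [hg ⟨0, hm⟩, h0]; simp
    have h2 : ρ ⟨0, hm⟩ g⁻¹ (ρ ⟨0, hm⟩ g w) = w := by
      rw [← Module.End.mul_apply, ← map_mul, inv_mul_cancel, map_one,
        Module.End.one_apply]
    rw [h1, map_zero] at h2
    exact hw h2.symm
  -- g is central
  have hcen : g ∈ Subgroup.center G := by
    rw [Subgroup.mem_center_iff]
    intro x
    by_contra hne
    have hne' : (x * g) * (g * x)⁻¹ ≠ 1 := by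
      intro he
      exact hne (by rwa [mul_inv_eq_one] at he)
    obtain ⟨j, hj⟩ := hfaith _ hne'
    apply hj
    have hcomm : ρ j (x * g) = ρ j (g * x) := by
      rw [map_mul, map_mul, hg j]
      ext w
      simp [Module.End.mul_apply]
    rw [map_mul, hcomm, ← map_mul, mul_inv_cancel, map_one]
  set z : ↥(Subgroup.center G) := ⟨g, hcen⟩ with hzdef
  -- all ψ j agree on z
  have hval : ∀ j, (ψ j z : ℂ) = l := by
    intro j
    obtain ⟨w, hw⟩ := exists_ne (0 : W j)
    have : (ψ j z : ℂ) • w = l • w := by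
      have h1 := hψ j z
      have h2 := hg j
      have : ((ψ j z : ℂ) • (1 : W j →ₗ[ℂ] W j)) w
          = (l • (1 : W j →ₗ[ℂ] W j)) w := by rw [← h1, h2]
      simpa using this
    exact smul_left_injective ℂ hw this
  have hsame : ∀ j, ψ j z = ψ ⟨0, hm⟩ z := by
    intro j
    ext
    rw [hval j, hval ⟨0, hm⟩]
  -- every character kills z
  have hall : ∀ χ : ↥(Subgroup.center G) →* ℂˣ, χ z = 1 := by
    intro χ
    let ev : (↥(Subgroup.center G) →* ℂˣ) →* ℂˣ :=
      { toFun := fun φ => φ z, map_one' := rfl, map_mul' := fun a b => rfl }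
    have hsub : Subgroup.closure
        (Set.range fun j : Fin m => ψ j * (ψ ⟨0, hm⟩)⁻¹) ≤ ev.ker := by
      rw [Subgroup.closure_le]
      rintro _ ⟨j, rfl⟩
      simp only [MonoidHom.mem_ker, SetLike.mem_coe]
      show (ψ j * (ψ ⟨0, hm⟩)⁻¹) z = 1
      rw [MonoidHom.mul_apply, MonoidHom.inv_apply, hsame j, mul_inv_cancel]
    rw [hcenter] at hsub
    exact hsub (Subgroup.mem_top χ)
  -- hence z = 1
  have hz1 : z = 1 := by
    by_contra hne
    obtain ⟨φ, hφ⟩ :=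
      open scoped IsMulCommutative in
      CommGroup.exists_apply_ne_one_of_hasEnoughRootsOfUnity
        (↥(Subgroup.center G)) ℂ hne
    exact hφ (hall φ)
  have : g = 1 := by
    have := congrArg (Subtype.val) hz1
    exact this
  rw [hgdef] at this
  rw [inv_mul_eq_one] at this
  exact this.symm
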